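/- arXiv:1912.00788 — 2 statements merged into one kernel-verified Lean document; each statement's English description precedes it below -/
import Mathlib

section
/- Let X = [I_{k+1} | (x_{l,m})] be the (k+1)×(n+1) matrix with identity block in columns 0,...,k and variable entries x_{l,m} (0 ≤ l ≤ k, k+1 ≤ m ≤ n). Fix a (k+1)-subset J of {0,...,n} and sets K ⊂ {0,...,k}, K' ⊂ {k+1,...,n} with |K| = |K'| = m'. Then the iterated partial derivative of det(M_J) with respect to the variables {x_{k_i, k'_i}} pairing K with K' (one derivative per pair) is, up to sign, det(M_{J,K,K'}) if K' ⊂ J and m' ≤ d(I,J), and is 0 if K' ⊄ J, where M_{J,K,K'} is obtained from M_J by deleting the columns indexed by K' and the rows indexed by K, and I = {0,...,k}. -/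
open MvPolynomial

lemma aux_pderiv_finset_prod {σ : Type*} {ι : Type*} [DecidableEq ι] (v : σ) (s : Finset ι)
    (f : ι → MvPolynomial σ ℚ) :
    pderiv v (∏ i ∈ s, f i) = ∑ i ∈ s, pderiv v (f i) * ∏ j ∈ s.erase i, f j := by
  classical
  induction s using Finset.induction with
  | empty => simp
  | insert x s h ih =>
    rw [Finset.prod_insert h, pderiv_mul, ih, Finset.sum_insert h, Finset.erase_insert h]
    rw [Finset.mul_sum]
    congr 1
    apply Finset.sum_congr rfl
    intro i hi
    rw [Finset.erase_insert_of_ne (by rintro rfl; exact h hi), Finset.prod_insert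
      (by simp [h]), ← mul_assoc, ← mul_assoc, mul_comm (f x)]

lemma aux_pderiv_det {σ : Type*} {N : ℕ} (v : σ)
    (M : Matrix (Fin N) (Fin N) (MvPolynomial σ ℚ)) :
    pderiv v M.det = ∑ q, (M.updateCol q fun p => pderiv v (M p q)).det := by
  classical
  simp only [Matrix.det_apply]
  rw [map_sum]
  rw [Finset.sum_comm]
  apply Finset.sum_congr rfl
  intro σ' _
  simp only [Units.smul_def]
  rw [map_zsmul, aux_pderiv_finset_prod, Finset.smul_sum]
  apply Finset.sum_congr rfl
  intro q _
  congr 1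
  rw [← Finset.mul_prod_erase Finset.univ _ (Finset.mem_univ q)]
  rw [Matrix.updateCol_self]
  congr 1
  apply Finset.prod_congr rfl
  intro j hj
  rw [Matrix.updateCol_ne (Finset.ne_of_mem_erase hj)]

lemma aux_det_submatrix_pm {R : Type*} [CommRing R] {ι κ : Type*}
    [DecidableEq ι] [Fintype ι] [DecidableEq κ] [Fintype κ]
    (e f : κ ≃ ι) (M : Matrix ι ι R) :
    (M.submatrix e f).det = M.det ∨ (M.submatrix e f).det = - M.det := by
  have h : M.submatrix e f = (M.submatrix e e).submatrix id (f.trans e.symm : Equiv.Perm κ) := by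
    ext p q; simp [Matrix.submatrix_apply]
  rw [h, Matrix.det_permute', Matrix.det_submatrix_equiv_self]
  rcases Int.units_eq_one_or (Equiv.Perm.sign (f.trans e.symm : Equiv.Perm κ)) with hs | hs <;>
    rw [hs] <;> simp

lemma aux_foldr_comp_apply {R M : Type*} [CommSemiring R] [AddCommMonoid M] [Module R M]
    (l : List (M →ₗ[R] M)) (x : M) :
    (l.foldr (fun f g => f ∘ₗ g) LinearMap.id) x = l.foldr (fun f y => f y) x := by
  induction l with
  | nil => rfl
  | cons h t ih => simp [List.foldr_cons, ih]

open MvPolynomial in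
/-- Iterated partial derivatives of the Plücker coordinates of the standard
parametrization of G(k,n): differentiating det(M_J) once with respect to each
variable x_{k_i,k'_i} (pairing K = {k_1,...,k_{m'}} ⊆ {0,...,k} with
K' = {k'_1,...,k'_{m'}} ⊆ {k+1,...,n}) yields ± det(M_{J,K,K'}) if K' ⊆ J
(and m' ≤ d(I,J)), and 0 if K' ⊄ J.  Here M_{J,K,K'} is obtained from M_J by
deleting the rows indexed by K and the columns indexed by K'. -/
theorem stmt_15 (n k m' : ℕ) (hkn : k ≤ n) (J : Finset ℕ)
    (hJ : J ⊆ Finset.range (n + 1)) (hJc : J.card = k + 1)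
    (A : Fin (k + 1) → ℕ → MvPolynomial (Fin (k + 1) × ℕ) ℚ)
    (hA : ∀ l m, A l m =
      if m = (l : ℕ) then 1 else if m ≤ k then 0 else MvPolynomial.X (l, m))
    (MJ : Matrix (Fin (k + 1)) (Fin (k + 1)) (MvPolynomial (Fin (k + 1) × ℕ) ℚ))
    (hMJ : ∀ p q, MJ p q = A p ((J.orderIsoOfFin hJc q : {x // x ∈ J}) : ℕ))
    -- the rows K ⊆ I = {0,...,k} and columns K' ⊆ {k+1,...,n}, paired by index
    (a : Fin m' → Fin (k + 1)) (ha : Function.Injective a)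
    (b : Fin m' → ℕ) (hb : Function.Injective b)
    (hbr : ∀ i, b i ∈ Finset.Icc (k + 1) n)
    -- the iterated partial derivative with respect to the x_{a i, b i}
    (D : MvPolynomial (Fin (k + 1) × ℕ) ℚ →ₗ[ℚ] MvPolynomial (Fin (k + 1) × ℕ) ℚ)
    (hD : D = (List.ofFn fun i : Fin m' =>
      (MvPolynomial.pderiv (R := ℚ) ((a i, b i) : Fin (k + 1) × ℕ)).toLinearMap).foldr
        (fun f g => f ∘ₗ g) LinearMap.id)
    -- enumerations of the remaining rows {0,...,k} \ K and columns J \ K'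
    (ρ : Fin (k + 1 - m') → Fin (k + 1)) (hρ : Function.Injective ρ)
    (hρr : ∀ x, (∃ j, ρ j = x) ↔ ∀ i, a i ≠ x)
    (c : Fin (k + 1 - m') → ℕ) (hc : Function.Injective c)
    (hcr : ∀ x, (∃ j, c j = x) ↔ x ∈ J ∧ ∀ i, b i ≠ x)
    (M' : Matrix (Fin (k + 1 - m')) (Fin (k + 1 - m'))
      (MvPolynomial (Fin (k + 1) × ℕ) ℚ))
    (hM' : ∀ p q, M' p q = A (ρ p) (c q)) :
    ((∀ i, b i ∈ J) → m' ≤ (k + 1) - ((Finset.range (k + 1)) ∩ J).card →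
      D MJ.det = M'.det ∨ D MJ.det = - M'.det) ∧
    ((∃ i, b i ∉ J) → D MJ.det = 0) := by
  classical
  set col : Fin (k + 1) → ℕ := fun q => ((J.orderIsoOfFin hJc q : {x // x ∈ J}) : ℕ) with hcoldef
  have hcol_inj : Function.Injective col := fun p q h => by
    have := (J.orderIsoOfFin hJc).injective (Subtype.ext h)
    exact this
  have hcol_mem : ∀ q, col q ∈ J := fun q => (J.orderIsoOfFin hJc q).2
  have hcol_symm : ∀ (x : ℕ) (hx : x ∈ J),
      col ((J.orderIsoOfFin hJc).symm ⟨x, hx⟩) = x := fun x hx =>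
    congrArg Subtype.val ((J.orderIsoOfFin hJc).apply_symm_apply ⟨x, hx⟩)
  -- the family of partially differentiated matrices
  obtain ⟨Ms, hMs⟩ : ∃ Ms : Finset (Fin m') →
      Matrix (Fin (k + 1)) (Fin (k + 1)) (MvPolynomial (Fin (k + 1) × ℕ) ℚ),
      ∀ s p q, Ms s p q = if (∃ i ∈ s, b i = col q)
        then (if ∃ i ∈ s, b i = col q ∧ a i = p then 1 else 0)
        else MJ p q :=
    ⟨fun s p q => if (∃ i ∈ s, b i = col q)
        then (if ∃ i ∈ s, b i = col q ∧ a i = p then 1 else 0)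
        else MJ p q, fun s p q => rfl⟩
  -- derivative of an entry of A
  have hderA : ∀ (i0 : Fin m') (p : Fin (k + 1)) (x : ℕ),
      pderiv ((a i0, b i0) : Fin (k + 1) × ℕ) (A p x)
        = if p = a i0 ∧ x = b i0 then 1 else 0 := by
    intro i0 p x
    have hbk : k + 1 ≤ b i0 := (Finset.mem_Icc.mp (hbr i0)).1
    have hpk : (p : ℕ) < k + 1 := p.isLt
    rw [hA]
    by_cases h1 : x = (p : ℕ)
    · subst h1
      have hne : ¬ (p = a i0 ∧ (p : ℕ) = b i0) := by
        rintro ⟨-, h⟩; omega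
      simp [hne]
    · by_cases h2 : x ≤ k
      · have hne : ¬ (p = a i0 ∧ x = b i0) := by
          rintro ⟨-, rfl⟩; omega
        simp [h1, h2, hne]
      · rw [if_neg h1, if_neg h2]
        by_cases hpx : ((p, x) : Fin (k + 1) × ℕ) = (a i0, b i0)
        · rw [hpx, pderiv_X_self, if_pos (Prod.mk.injEq .. ▸ hpx)]
        · rw [pderiv_X_of_ne hpx, if_neg (by
            rintro ⟨rfl, rfl⟩; exact hpx rfl)]
  -- derivative of an entry of Ms s
  have hder : ∀ (i0 : Fin m') (s : Finset (Fin m')) (p q : _),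
      pderiv ((a i0, b i0) : Fin (k + 1) × ℕ) (Ms s p q)
        = if (∀ i ∈ s, b i ≠ col q) ∧ p = a i0 ∧ col q = b i0 then 1 else 0 := by
    intro i0 s p q
    rw [hMs]
    by_cases hq : ∃ i ∈ s, b i = col q
    · rw [if_pos hq]
      have : ¬ ((∀ i ∈ s, b i ≠ col q) ∧ p = a i0 ∧ col q = b i0) := by
        rintro ⟨h, -⟩; obtain ⟨i, hi, hbi⟩ := hq; exact h i hi hbi
      rw [if_neg this]
      by_cases hp : ∃ i ∈ s, b i = col q ∧ a i = p
      · rw [if_pos hp]; simp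
      · rw [if_neg hp]; simp
    · rw [if_neg hq, hMJ, hderA]
      push_neg at hq
      by_cases hc' : p = a i0 ∧ col q = b i0
      · rw [if_pos hc', if_pos ⟨hq, hc'⟩]
      · rw [if_neg hc', if_neg (by rintro ⟨-, h2⟩; exact hc' h2)]
  -- the zero step
  have zstep : ∀ (i0 : Fin m') (s : Finset (Fin m')), b i0 ∉ J →
      pderiv ((a i0, b i0) : Fin (k + 1) × ℕ) (Ms s).det = 0 := by
    intro i0 s hbi
    rw [aux_pderiv_det]
    apply Finset.sum_eq_zero
    intro q _
    apply Matrix.det_eq_zero_of_column_eq_zero q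
    intro p
    rw [Matrix.updateCol_self, hder]
    rw [if_neg]
    rintro ⟨-, -, h3⟩
    exact hbi (h3 ▸ hcol_mem q)
  -- the main step
  have step : ∀ (i0 : Fin m') (s : Finset (Fin m')), i0 ∉ s → b i0 ∈ J →
      pderiv ((a i0, b i0) : Fin (k + 1) × ℕ) (Ms s).det = (Ms (insert i0 s)).det := by
    intro i0 s hi0 hbi
    obtain ⟨q0, hq0⟩ : ∃ q0, col q0 = b i0 :=
      ⟨(J.orderIsoOfFin hJc).symm ⟨b i0, hbi⟩, hcol_symm _ hbi⟩
    have hq0unused : ∀ i ∈ s, b i ≠ col q0 := by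
      intro i hi h
      rw [hq0] at h
      exact hi0 (hb h ▸ hi)
    rw [aux_pderiv_det]
    rw [Finset.sum_eq_single q0]
    · congr 1
      ext p q
      by_cases hq : q = q0
      · rw [hq]
        rw [Matrix.updateCol_self, hder]
        rw [hMs, if_pos (⟨i0, Finset.mem_insert_self i0 s, hq0.symm⟩ :
          ∃ i ∈ insert i0 s, b i = col q0)]
        have h1 : ((∀ i ∈ s, b i ≠ col q0) ∧ p = a i0 ∧ col q0 = b i0) ↔
            (∃ i ∈ insert i0 s, b i = col q0 ∧ a i = p) := by
          constructor
          · rintro ⟨-, rfl, -⟩; exact ⟨i0, Finset.mem_insert_self i0 s, hq0.symm, rfl⟩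
          · rintro ⟨i, hi, h2, rfl⟩
            rcases Finset.mem_insert.mp hi with rfl | hi
            · exact ⟨hq0unused, rfl, hq0⟩
            · exact absurd h2 (hq0unused i hi)
        rw [if_congr h1 rfl rfl]
      · rw [Matrix.updateCol_ne hq, hMs, hMs]
        have hne : b i0 ≠ col q := by
          intro h; exact hq (hcol_inj (hq0.trans h)).symm
        have h1 : (∃ i ∈ insert i0 s, b i = col q) ↔ (∃ i ∈ s, b i = col q) := by
          constructor
          · rintro ⟨i, hi, h2⟩
            rcases Finset.mem_insert.mp hi with rfl | hi
            · exact absurd h2 hne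
            · exact ⟨i, hi, h2⟩
          · rintro ⟨i, hi, h2⟩; exact ⟨i, Finset.mem_insert_of_mem hi, h2⟩
        have h2 : (∃ i ∈ insert i0 s, b i = col q ∧ a i = p) ↔
            (∃ i ∈ s, b i = col q ∧ a i = p) := by
          constructor
          · rintro ⟨i, hi, h2, h3⟩
            rcases Finset.mem_insert.mp hi with rfl | hi
            · exact absurd h2 hne
            · exact ⟨i, hi, h2, h3⟩
          · rintro ⟨i, hi, h2⟩; exact ⟨i, Finset.mem_insert_of_mem hi, h2⟩
        rw [if_congr h1 (if_congr h2 rfl rfl) rfl]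
    · intro q _ hq
      apply Matrix.det_eq_zero_of_column_eq_zero q
      intro p
      rw [Matrix.updateCol_self, hder, if_neg]
      rintro ⟨-, -, h3⟩
      exact hq (hcol_inj (h3.trans hq0.symm))
    · intro h; exact absurd (Finset.mem_univ q0) h
  -- the key list induction
  have key : ∀ L : List (Fin m'), L.Nodup →
      L.foldr (fun i y => pderiv ((a i, b i) : Fin (k + 1) × ℕ) y) MJ.det
        = if (∀ i ∈ L, b i ∈ J) then (Ms L.toFinset).det else 0 := by
    intro L hL
    induction L with
    | nil =>
      simp only [List.foldr_nil, List.not_mem_nil, false_implies, implies_true, if_pos,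
        List.toFinset_nil]
      congr 1
      ext p q
      rw [hMs, if_neg (by rintro ⟨i, hi, -⟩; exact absurd hi (Finset.notMem_empty i))]
    | cons i0 L ih =>
      rw [List.nodup_cons] at hL
      rw [List.foldr_cons, ih hL.2]
      by_cases hall : ∀ i ∈ L, b i ∈ J
      · rw [if_pos hall]
        by_cases hbi : b i0 ∈ J
        · have hall' : ∀ i ∈ i0 :: L, b i ∈ J := by
            intro i hi
            rcases List.mem_cons.mp hi with h | h
            · rw [h]; exact hbi
            · exact hall i h
          rw [if_pos hall', List.toFinset_cons]
          exact step i0 L.toFinset (by simpa using hL.1) hbi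
        · have hnall : ¬ ∀ i ∈ i0 :: L, b i ∈ J :=
            fun h => hbi (h i0 List.mem_cons_self)
          rw [if_neg hnall]
          exact zstep i0 L.toFinset hbi
      · have hnall : ¬ ∀ i ∈ i0 :: L, b i ∈ J :=
          fun h => hall fun i hi => h i (List.mem_cons_of_mem i0 hi)
        rw [if_neg hall, map_zero, if_neg hnall]
  -- unfolding D
  have hDval : D MJ.det = (List.finRange m').foldr
      (fun i y => pderiv ((a i, b i) : Fin (k + 1) × ℕ) y) MJ.det := by
    rw [hD, aux_foldr_comp_apply, List.ofFn_eq_map, List.foldr_map]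
    rfl
  have hDkey : D MJ.det = if (∀ i, b i ∈ J) then (Ms Finset.univ).det else 0 := by
    rw [hDval, key _ (List.nodup_finRange m')]
    simp [List.toFinset_finRange]
  constructor
  · -- the case K' ⊆ J
    intro hbJ _
    rw [hDkey, if_pos hbJ]
    -- the row equivalence
    have hRbij : Function.Bijective (Sum.elim ρ a) := by
      constructor
      · rintro (x | x) (y | y) h <;> simp only [Sum.elim_inl, Sum.elim_inr] at h
        · rw [hρ h]
        · exact absurd rfl ((hρr (a y)).mp ⟨x, h⟩ y)
        · exact absurd rfl ((hρr (a x)).mp ⟨y, h.symm⟩ x)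
        · rw [ha h]
      · intro x
        by_cases h : ∃ i, a i = x
        · obtain ⟨i, hi⟩ := h; exact ⟨Sum.inr i, hi⟩
        · push_neg at h
          obtain ⟨j, hj⟩ := (hρr x).mpr h
          exact ⟨Sum.inl j, hj⟩
    -- the column maps
    have hcJ : ∀ j, c j ∈ J := fun j => ((hcr (c j)).mp ⟨j, rfl⟩).1
    have hcb : ∀ j i, b i ≠ c j := fun j => ((hcr (c j)).mp ⟨j, rfl⟩).2
    set e' : Fin (k + 1 - m') → Fin (k + 1) :=
      fun j => (J.orderIsoOfFin hJc).symm ⟨c j, hcJ j⟩ with he'def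
    set f : Fin m' → Fin (k + 1) :=
      fun i => (J.orderIsoOfFin hJc).symm ⟨b i, hbJ i⟩ with hfdef
    have hcole' : ∀ j, col (e' j) = c j := fun j => hcol_symm _ (hcJ j)
    have hcolf : ∀ i, col (f i) = b i := fun i => hcol_symm _ (hbJ i)
    have hCbij : Function.Bijective (Sum.elim e' f) := by
      constructor
      · rintro (x | x) (y | y) h <;> simp only [Sum.elim_inl, Sum.elim_inr] at h
        · have := congrArg col h; rw [hcole', hcole'] at this; rw [hc this]
        · have := congrArg col h; rw [hcole', hcolf] at this
          exact absurd this.symm (hcb x y)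
        · have := congrArg col h; rw [hcolf, hcole'] at this
          exact absurd this (hcb y x)
        · have := congrArg col h; rw [hcolf, hcolf] at this; rw [hb this]
      · intro q
        by_cases h : ∃ i, b i = col q
        · obtain ⟨i, hi⟩ := h
          refine ⟨Sum.inr i, hcol_inj ?_⟩
          simp only [Sum.elim_inr]
          rw [hcolf, hi]
        · push_neg at h
          obtain ⟨j, hj⟩ := (hcr (col q)).mpr ⟨hcol_mem q, h⟩
          refine ⟨Sum.inl j, hcol_inj ?_⟩
          simp only [Sum.elim_inl]
          rw [hcole', hj]
    set Re := Equiv.ofBijective _ hRbij with hRedef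
    set Ce := Equiv.ofBijective _ hCbij with hCedef
    have hblock : (Ms Finset.univ).submatrix Re Ce =
        Matrix.fromBlocks M' 0 (Matrix.of fun i s => A (a i) (c s)) 1 := by
      ext (p | p) (q | q) : 1 <;>
        simp only [Matrix.submatrix_apply, hRedef, hCedef, Equiv.ofBijective_apply,
          Sum.elim_inl, Sum.elim_inr, Matrix.fromBlocks_apply₁₁, Matrix.fromBlocks_apply₁₂,
          Matrix.fromBlocks_apply₂₁, Matrix.fromBlocks_apply₂₂, hMs, Matrix.of_apply]
      · rw [if_neg (by rintro ⟨i, -, h⟩; rw [hcole'] at h; exact hcb q i h),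
          hMJ, hM']
        rw [show ((J.orderIsoOfFin hJc) (e' q) : ℕ) = c q from hcole' q]
      · rw [if_pos ⟨q, Finset.mem_univ q, (hcolf q).symm⟩,
          if_neg (by
            rintro ⟨i, -, h1, h2⟩
            rw [hcolf] at h1
            have := hb h1
            subst this
            exact ((hρr (ρ p)).mp ⟨p, rfl⟩) i h2)]
        rfl
      · rw [if_neg (by rintro ⟨i, -, h⟩; rw [hcole'] at h; exact hcb q i h), hMJ]
        rw [show ((J.orderIsoOfFin hJc) (e' q) : ℕ) = c q from hcole' q]
      · rw [if_pos ⟨q, Finset.mem_univ q, (hcolf q).symm⟩]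
        have h1 : (∃ i ∈ Finset.univ, b i = col (f q) ∧ a i = a p) ↔ p = q := by
          constructor
          · rintro ⟨i, -, h1, h2⟩
            rw [hcolf] at h1
            have := hb h1; subst this
            exact (ha h2).symm
          · rintro rfl
            exact ⟨p, Finset.mem_univ p, (hcolf p).symm, rfl⟩
        rw [if_congr h1 rfl rfl, Matrix.one_apply]
    have hdetblock : ((Ms Finset.univ).submatrix Re Ce).det = M'.det := by
      rw [hblock, Matrix.det_fromBlocks_zero₁₂]
      simp
    rcases aux_det_submatrix_pm Re Ce (Ms Finset.univ) with h | h
    · left; rw [← hdetblock, h]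
    · right; rw [← hdetblock, h, neg_neg]
  · -- the case K' ⊄ J
    intro hex
    rw [hDkey, if_neg]
    push_neg
    exact hex
end

section
/- Evaluating at x = 0 (all variable entries zero): with notation as above, the iterated partial derivative ∂^{m'} det(M_J) / ∂x_{k_1,k'_1}...∂x_{k_{m'},k'_{m'}} at 0 equals ±1 if J = K' ∪ (I \ K), and equals 0 otherwise, where I = {0,...,k}, K = {k_1,...,k_{m'}} ⊂ I, K' = {k'_1,...,k'_{m'}} ⊂ {k+1,...,n}. -/
open MvPolynomial Finsupp

section aux
variable {σ R : Type*} [CommSemiring R] [DecidableEq σ]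

theorem StmtAux.coeff_pderiv' (v : σ) (m : σ →₀ ℕ) (P : MvPolynomial σ R) :
    coeff m (pderiv v P) = (m v + 1 : ℕ) * coeff (m + Finsupp.single v 1) P := by
  induction P using MvPolynomial.induction_on' with
  | monomial s a =>
    rw [pderiv_monomial, coeff_monomial, coeff_monomial]
    split_ifs with h1 h2 h2
    · subst h2
      simp [Finsupp.add_apply, Finsupp.single_apply]
      ring
    · -- h1 : s - single v 1 = m, h2 : m + single v 1 ≠ s
      rcases Nat.eq_zero_or_pos (s v) with h0 | h0
      · simp [h0]
      · exfalso; apply h2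
        subst h1
        ext w
        by_cases hw : w = v
        · subst hw
          simp [Finsupp.add_apply, Finsupp.single_apply, Nat.sub_add_cancel h0]
        · simp [Finsupp.add_apply, Finsupp.single_apply, hw, Ne.symm hw]
    · exfalso; apply h1
      subst h2
      ext w
      by_cases hw : w = v
      · subst hw; simp [Finsupp.add_apply, Finsupp.single_apply]
      · simp [Finsupp.add_apply, Finsupp.single_apply, hw, Ne.symm hw]
    · ring
  | add p q hp hq => simp [map_add, coeff_add, hp, hq, mul_add]

theorem StmtAux.coeff_foldr_pderiv (l : List σ) (hl : l.Nodup) (t : σ →₀ ℕ)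
    (ht : ∀ v ∈ l, t v = 0) (P : MvPolynomial σ R) :
    coeff t (((l.map fun v => (pderiv (R := R) v).toLinearMap).foldr
        (fun f g => f ∘ₗ g) LinearMap.id) P)
      = coeff (t + (l.map fun v => Finsupp.single v 1).sum) P := by
  induction l generalizing t with
  | nil => simp
  | cons x l ih =>
    have hx : x ∉ l := (List.nodup_cons.mp hl).1
    have hl' : l.Nodup := (List.nodup_cons.mp hl).2
    simp only [List.map_cons, List.foldr_cons, LinearMap.comp_apply]
    erw [coeff_pderiv']
    rw [ ih hl' _ (fun v hv => by
      have hxv : x ≠ v := fun h => hx (h ▸ hv)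
      simp [Finsupp.add_apply, ht v (List.mem_cons_of_mem _ hv),
        Finsupp.single_apply, hxv])]
    rw [ht x List.mem_cons_self]
    simp [List.sum_cons, add_assoc, add_left_comm, add_comm]

theorem StmtAux.eval_zero_eq_coeff_zero (P : MvPolynomial σ R) :
    eval (0 : σ → R) P = coeff 0 P := by
  induction P using MvPolynomial.induction_on' with
  | monomial s a =>
    rw [eval_monomial, coeff_monomial]
    by_cases hs : s = 0
    · subst hs; simp
    · rw [if_neg hs]
      obtain ⟨i, hi⟩ : ∃ i, s i ≠ 0 := by
        by_contra h
        push_neg at h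
        exact hs (Finsupp.ext fun i => h i)
      rw [Finsupp.prod, Finset.prod_eq_zero (Finsupp.mem_support_iff.mpr hi)
        (by simp [zero_pow hi]), mul_zero]
  | add p q hp hq => rw [map_add, coeff_add, hp, hq]

end aux

open StmtAux in
/-- Evaluating the iterated partial derivative of det(M_J) at x = 0:
∂^{m'} det(M_J)/∂x_{k_1,k'_1}⋯∂x_{k_{m'},k'_{m'}} (0) = ±1 if
J = K' ∪ (I \ K) and 0 otherwise, where I = {0,...,k},
K = {k_1,...,k_{m'}} ⊆ I and K' = {k'_1,...,k'_{m'}} ⊆ {k+1,...,n}. -/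
theorem stmt_16 (n k m' : ℕ) (hkn : k ≤ n) (J : Finset ℕ)
    (hJ : J ⊆ Finset.range (n + 1)) (hJc : J.card = k + 1)
    (A : Fin (k + 1) → ℕ → MvPolynomial (Fin (k + 1) × ℕ) ℚ)
    (hA : ∀ l m, A l m =
      if m = (l : ℕ) then 1 else if m ≤ k then 0 else MvPolynomial.X (l, m))
    (MJ : Matrix (Fin (k + 1)) (Fin (k + 1)) (MvPolynomial (Fin (k + 1) × ℕ) ℚ))
    (hMJ : ∀ p q, MJ p q = A p ((J.orderIsoOfFin hJc q : {x // x ∈ J}) : ℕ))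
    (a : Fin m' → Fin (k + 1)) (ha : Function.Injective a)
    (b : Fin m' → ℕ) (hb : Function.Injective b)
    (hbr : ∀ i, b i ∈ Finset.Icc (k + 1) n)
    (D : MvPolynomial (Fin (k + 1) × ℕ) ℚ →ₗ[ℚ] MvPolynomial (Fin (k + 1) × ℕ) ℚ)
    (hD : D = (List.ofFn fun i : Fin m' =>
      (MvPolynomial.pderiv (R := ℚ) ((a i, b i) : Fin (k + 1) × ℕ)).toLinearMap).foldr
        (fun f g => f ∘ₗ g) LinearMap.id) :
    (J = (Finset.image b Finset.univ) ∪
        ((Finset.range (k + 1)) \ (Finset.image (fun i => ((a i : ℕ))) Finset.univ)) →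
      MvPolynomial.eval (0 : Fin (k + 1) × ℕ → ℚ) (D MJ.det) = 1 ∨
      MvPolynomial.eval (0 : Fin (k + 1) × ℕ → ℚ) (D MJ.det) = -1) ∧
    (J ≠ (Finset.image b Finset.univ) ∪
        ((Finset.range (k + 1)) \ (Finset.image (fun i => ((a i : ℕ))) Finset.univ)) →
      MvPolynomial.eval (0 : Fin (k + 1) × ℕ → ℚ) (D MJ.det) = 0) := by
  classical
  -- notation
  set g : Fin (k + 1) → ℕ := fun q => ((J.orderIsoOfFin hJc q : {x // x ∈ J}) : ℕ) with hg
  set v : Fin m' → Fin (k + 1) × ℕ := fun i => (a i, b i) with hv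
  set S : (Fin (k + 1) × ℕ) →₀ ℕ := ∑ i : Fin m', Finsupp.single (v i) 1 with hS
  set T : Finset (Fin (k + 1)) := Finset.univ.filter (fun q => k < g q) with hT
  have hvinj : Function.Injective v := fun i j h => ha (congrArg Prod.fst h)
  have hginj : Function.Injective g := by
    intro q₁ q₂ h
    exact (J.orderIsoOfFin hJc).injective (Subtype.ext h)
  have hgJ : ∀ q, g q ∈ J := fun q => (J.orderIsoOfFin hJc q).2
  -- Step 1: eval 0 (D P) = coeff S P
  have hstep1 : eval (0 : Fin (k + 1) × ℕ → ℚ) (D MJ.det) = coeff S MJ.det := by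
    rw [eval_zero_eq_coeff_zero, hD]
    have hlist : (List.ofFn fun i : Fin m' =>
        (pderiv (R := ℚ) ((a i, b i) : Fin (k + 1) × ℕ)).toLinearMap) =
        (List.ofFn v).map fun w => (pderiv (R := ℚ) w).toLinearMap := by
      rw [List.map_ofFn]; rfl
    rw [hlist, coeff_foldr_pderiv _ (List.nodup_ofFn.mpr hvinj) 0 (by simp), zero_add,
      List.map_ofFn]
    rw [List.sum_ofFn, hS]
    rfl
  -- entries
  have hentry1 : ∀ (p : Fin (k + 1)) q, q ∈ T → MJ p q = X (p, g q) := by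
    intro p q hq
    rw [hT, Finset.mem_filter] at hq
    have hgk : k < g q := hq.2
    have hp : (p : ℕ) ≤ k := Fin.is_le p
    rw [hMJ, hA]
    rw [show ((J.orderIsoOfFin hJc q : {x // x ∈ J}) : ℕ) = g q from rfl]
    rw [if_neg (by omega), if_neg (by omega)]
  have hentry2 : ∀ (p : Fin (k + 1)) q, q ∉ T →
      MJ p q = if g q = (p : ℕ) then 1 else 0 := by
    intro p q hq
    rw [hT, Finset.mem_filter] at hq
    have hgk : g q ≤ k := by
      by_contra h
      exact hq ⟨Finset.mem_univ q, by omega⟩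
    rw [hMJ, hA]
    rw [show ((J.orderIsoOfFin hJc q : {x // x ∈ J}) : ℕ) = g q from rfl]
    by_cases h : g q = (p : ℕ)
    · rw [if_pos h, if_pos h]
    · rw [if_neg h, if_neg h, if_pos hgk]
  -- product formula
  have hprod : ∀ σ : Equiv.Perm (Fin (k + 1)), (∏ q, MJ (σ q) q) =
      (if ∀ q ∉ T, g q = ((σ q : Fin (k+1)) : ℕ) then 1 else 0) *
        monomial (∑ q ∈ T, Finsupp.single (σ q, g q) 1) 1 := by
    intro σ
    have hmemc : ∀ q : Fin (k + 1),
        q ∈ Finset.univ.filter (fun q => ¬ k < g q) ↔ q ∉ T := by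
      intro q
      simp [hT]
    rw [← Finset.prod_filter_mul_prod_filter_not Finset.univ (fun q => k < g q)
      (fun q => MJ (σ q) q), ← hT]
    have h1 : ∏ q ∈ T, MJ (σ q) q =
        monomial (∑ q ∈ T, Finsupp.single ((σ q : Fin (k+1)), g q) (1:ℕ)) (1:ℚ) := by
      rw [monomial_sum_one]
      refine Finset.prod_congr rfl fun q hq => ?_
      rw [hentry1 _ q hq]
      rfl
    have h2 : ∏ q ∈ Finset.univ.filter (fun q => ¬ k < g q), MJ (σ q) q =
        (if ∀ q ∉ T, g q = ((σ q : Fin (k+1)) : ℕ) then 1 else 0 : MvPolynomial (Fin (k+1) × ℕ) ℚ) := by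
      rw [Finset.prod_congr rfl (fun q hq => hentry2 (σ q) q ((hmemc q).mp hq))]
      by_cases hc : ∀ q ∉ T, g q = ((σ q : Fin (k+1)) : ℕ)
      · rw [if_pos hc]
        refine Finset.prod_eq_one fun q hq => ?_
        rw [if_pos (hc q ((hmemc q).mp hq))]
      · rw [if_neg hc]
        push_neg at hc
        obtain ⟨q₀, hq₀, hne⟩ := hc
        exact Finset.prod_eq_zero ((hmemc q₀).mpr hq₀) (if_neg hne)
    rw [h1, h2, mul_comm]
  -- indicator finsupps
  have hFapp : ∀ (s : Finset (Fin (k + 1) × ℕ)) x,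
      (∑ y ∈ s, Finsupp.single y (1:ℕ)) x = if x ∈ s then 1 else 0 := by
    intro s x
    rw [Finset.sum_apply']
    rw [Finset.sum_congr rfl (fun y _ => Finsupp.single_apply)]
    exact Finset.sum_ite_eq' s x (fun _ => 1)
  have hFinj : ∀ s t : Finset (Fin (k + 1) × ℕ),
      (∑ y ∈ s, Finsupp.single y (1:ℕ)) = (∑ y ∈ t, Finsupp.single y 1) → s = t := by
    intro s t h
    ext x
    have := congrArg (fun f => f x) h
    simp only [hFapp] at this
    by_cases hs : x ∈ s <;> by_cases ht : x ∈ t <;>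
      simp [hs, ht] at this ⊢
  have hpairinj : ∀ σ : Equiv.Perm (Fin (k + 1)),
      Set.InjOn (fun q => (σ q, g q)) T := by
    intro σ q₁ _ q₂ _ h
    exact hginj (congrArg Prod.snd h)
  have hSimg : S = ∑ y ∈ Finset.univ.image v, Finsupp.single y 1 := by
    rw [hS, Finset.sum_image (fun i _ j _ h => hvinj h)]
  have hsum_eq_iff : ∀ σ : Equiv.Perm (Fin (k + 1)),
      (∑ q ∈ T, Finsupp.single (σ q, g q) (1:ℕ)) = S ↔
        T.image (fun q => (σ q, g q)) = Finset.univ.image v := by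
    intro σ
    have himg : (∑ q ∈ T, Finsupp.single ((σ q : Fin (k+1)), g q) (1:ℕ)) =
        ∑ y ∈ T.image (fun q => (σ q, g q)), Finsupp.single y 1 :=
      (Finset.sum_image (f := fun y => Finsupp.single y (1:ℕ)) (g := fun q => ((σ q : Fin (k+1)), g q)) fun x hx y hy hxy =>
        hpairinj σ (Finset.mem_coe.mpr hx) (Finset.mem_coe.mpr hy) hxy).symm
    rw [hSimg, himg]
    constructor
    · exact hFinj _ _
    · intro h
      rw [h]
  -- coefficient of each term
  have hcoeff : ∀ σ : Equiv.Perm (Fin (k + 1)),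
      coeff S (((Equiv.Perm.sign σ : ℤ) : MvPolynomial (Fin (k+1) × ℕ) ℚ) *
          ∏ q, MJ (σ q) q) =
        if (∀ q ∉ T, g q = ((σ q : Fin (k+1)) : ℕ)) ∧
            T.image (fun q => (σ q, g q)) = Finset.univ.image v
          then ((Equiv.Perm.sign σ : ℤ) : ℚ) else 0 := by
    intro σ
    rw [(map_intCast (C : ℚ →+* MvPolynomial (Fin (k+1) × ℕ) ℚ)
      ((Equiv.Perm.sign σ : ℤ))).symm, coeff_C_mul, hprod σ]
    by_cases h1 : ∀ q ∉ T, g q = ((σ q : Fin (k+1)) : ℕ)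
    · rw [if_pos h1, one_mul, coeff_monomial]
      by_cases h2 : T.image (fun q => (σ q, g q)) = Finset.univ.image v
      · rw [if_pos ((hsum_eq_iff σ).mpr h2), mul_one, if_pos ⟨h1, h2⟩]
      · rw [if_neg (fun hh => h2 ((hsum_eq_iff σ).mp hh)), mul_zero,
          if_neg (fun hh => h2 hh.2)]
    · rw [if_neg h1, zero_mul, coeff_zero, mul_zero, if_neg (fun hh => h1 hh.1)]
  have hdet : coeff S MJ.det = ∑ σ : Equiv.Perm (Fin (k + 1)),
      if (∀ q ∉ T, g q = ((σ q : Fin (k+1)) : ℕ)) ∧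
          T.image (fun q => (σ q, g q)) = Finset.univ.image v
        then ((Equiv.Perm.sign σ : ℤ) : ℚ) else 0 := by
    rw [Matrix.det_apply', coeff_sum]
    exact Finset.sum_congr rfl fun σ _ => hcoeff σ
  -- J as image of g
  have hJg : Finset.univ.image g = J := by
    apply Finset.eq_of_subset_of_card_le
    · intro x hx
      obtain ⟨q, _, rfl⟩ := Finset.mem_image.mp hx
      exact hgJ q
    · rw [Finset.card_image_of_injective _ hginj, hJc]
      simp
  -- Direction A: nonzero term forces J = target
  have hdirA : ∀ σ : Equiv.Perm (Fin (k + 1)),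
      (∀ q ∉ T, g q = ((σ q : Fin (k+1)) : ℕ)) →
      T.image (fun q => (σ q, g q)) = Finset.univ.image v →
      J = (Finset.image b Finset.univ) ∪
        ((Finset.range (k + 1)) \ (Finset.image (fun i => ((a i : ℕ))) Finset.univ)) := by
    intro σ h1 h2
    have hsnd : T.image g = Finset.univ.image b := by
      have h := congrArg (Finset.image Prod.snd) h2
      rw [Finset.image_image, Finset.image_image] at h
      exact h
    have hfst : T.image (fun q => (σ q : Fin (k+1))) = Finset.univ.image a := by
      have h := congrArg (Finset.image Prod.fst) h2
      rw [Finset.image_image, Finset.image_image] at h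
      exact h
    have hfst' : T.image (fun q => ((σ q : Fin (k+1)) : ℕ)) =
        Finset.univ.image (fun i => ((a i : ℕ))) := by
      have h := congrArg (Finset.image (fun p : Fin (k+1) => (p : ℕ))) hfst
      rw [Finset.image_image, Finset.image_image] at h
      exact h
    have hvalinj : Function.Injective (fun q : Fin (k+1) => ((σ q : Fin (k+1)) : ℕ)) :=
      fun x y h => σ.injective (Fin.val_injective h)
    have hunion : T.image (fun q => ((σ q : Fin (k+1)) : ℕ)) ∪
        Tᶜ.image (fun q => ((σ q : Fin (k+1)) : ℕ)) = Finset.range (k + 1) := by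
      rw [← Finset.image_union, Finset.union_compl]
      ext x
      simp only [Finset.mem_image, Finset.mem_univ, true_and, Finset.mem_range]
      constructor
      · rintro ⟨q, rfl⟩
        exact (σ q).isLt
      · intro hx
        exact ⟨σ.symm ⟨x, hx⟩, by simp⟩
    have hdisj : Disjoint (T.image (fun q => ((σ q : Fin (k+1)) : ℕ)))
        (Tᶜ.image (fun q => ((σ q : Fin (k+1)) : ℕ))) := by
      rw [Finset.disjoint_image hvalinj]
      exact disjoint_compl_right
    have hTcimg : Tᶜ.image (fun q => ((σ q : Fin (k+1)) : ℕ)) = Tᶜ.image g :=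
      Finset.image_congr fun q hq => (h1 q (Finset.mem_compl.mp hq)).symm
    have hTcg : Tᶜ.image g = Finset.range (k + 1) \ Finset.univ.image (fun i => ((a i : ℕ))) := by
      rw [← hTcimg, ← hfst', ← hunion]
      exact (Finset.union_sdiff_cancel_left hdisj).symm
    rw [← hJg, ← Finset.union_compl T, Finset.image_union, hsnd, hTcg]
  have hmemT : ∀ q, q ∈ T ↔ k < g q := by
    intro q
    simp [hT]
  constructor
  · intro hJeq
    rw [hstep1, hdet]
    have hbk : ∀ i, k < b i := fun i => by
      have := (Finset.mem_Icc.mp (hbr i)).1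
      omega
    have hexi : ∀ q, k < g q → ∃ i, b i = g q := by
      intro q hq
      have hgJ' := hgJ q
      rw [hJeq] at hgJ'
      rcases Finset.mem_union.mp hgJ' with h | h
      · obtain ⟨i, _, hi⟩ := Finset.mem_image.mp h
        exact ⟨i, hi⟩
      · exact absurd (Finset.mem_range.mp (Finset.mem_sdiff.mp h).1) (by omega)
    have hnotina : ∀ q, ¬ k < g q →
        g q ∉ Finset.univ.image (fun i => ((a i : ℕ))) := by
      intro q hq
      have hgJ' := hgJ q
      rw [hJeq] at hgJ'
      rcases Finset.mem_union.mp hgJ' with h | h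
      · obtain ⟨i, _, hi⟩ := Finset.mem_image.mp h
        exact absurd (hi ▸ hbk i) hq
      · exact (Finset.mem_sdiff.mp h).2
    set f : Fin (k + 1) → Fin (k + 1) := fun q =>
      if h : k < g q then a (hexi q h).choose else ⟨g q, by omega⟩ with hf
    have hbchoose : ∀ q (h : k < g q), b (hexi q h).choose = g q :=
      fun q h => (hexi q h).choose_spec
    have hmix : ∀ q₁ q₂, k < g q₁ → ¬ k < g q₂ → f q₁ ≠ f q₂ := by
      intro q₁ q₂ h₁ h₂ hfe
      simp only [hf] at hfe
      simp only [dif_pos h₁, dif_neg h₂] at hfe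
      apply hnotina q₂ h₂
      refine Finset.mem_image.mpr ⟨(hexi q₁ h₁).choose, Finset.mem_univ _, ?_⟩
      rw [hfe]
    have hfinj : Function.Injective f := by
      intro q₁ q₂ hfe
      by_cases h₁ : k < g q₁ <;> by_cases h₂ : k < g q₂
      · simp only [hf] at hfe
        simp only [dif_pos h₁, dif_pos h₂] at hfe
        apply hginj
        rw [← hbchoose q₁ h₁, ← hbchoose q₂ h₂, ha hfe]
      · exact absurd hfe (hmix q₁ q₂ h₁ h₂)
      · exact absurd hfe.symm (hmix q₂ q₁ h₂ h₁)
      · simp only [hf] at hfe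
        simp only [dif_neg h₁, dif_neg h₂] at hfe
        exact hginj (congrArg Fin.val hfe)
    set σ₀ : Equiv.Perm (Fin (k + 1)) :=
      Equiv.ofBijective f (Finite.injective_iff_bijective.mp hfinj) with hσ₀
    have hσ₀app : ∀ q, σ₀ q = f q := fun q => rfl
    have hc1 : ∀ q ∉ T, g q = ((σ₀ q : Fin (k+1)) : ℕ) := by
      intro q hq
      simp only [hσ₀app, hf]
      rw [dif_neg (fun h => hq ((hmemT q).mpr h))]
    have hc2 : T.image (fun q => (σ₀ q, g q)) = Finset.univ.image v := by
      apply Finset.Subset.antisymm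
      · intro x hx
        obtain ⟨q, hq, rfl⟩ := Finset.mem_image.mp hx
        have hkq := (hmemT q).mp hq
        refine Finset.mem_image.mpr ⟨(hexi q hkq).choose, Finset.mem_univ _, ?_⟩
        rw [hv]
        simp only [hσ₀app, hf]
        simp only [dif_pos hkq]
        rw [hbchoose q hkq]
      · intro x hx
        obtain ⟨i, _, rfl⟩ := Finset.mem_image.mp hx
        have hbiJ : b i ∈ J := by
          rw [hJeq]
          exact Finset.mem_union_left _
            (Finset.mem_image.mpr ⟨i, Finset.mem_univ _, rfl⟩)
        obtain ⟨q, _, hq⟩ := Finset.mem_image.mp (hJg ▸ hbiJ : b i ∈ Finset.univ.image g)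
        have hkq : k < g q := hq ▸ hbk i
        have hchoosei : (hexi q hkq).choose = i := hb (by rw [hbchoose q hkq, hq])
        refine Finset.mem_image.mpr ⟨q, (hmemT q).mpr hkq, ?_⟩
        simp only [hσ₀app, hf]
        simp only [dif_pos hkq, hchoosei]
        rw [hv, hq]
    rw [Finset.sum_eq_single_of_mem σ₀ (Finset.mem_univ σ₀) ?_]
    · rw [if_pos ⟨hc1, hc2⟩]
      rcases Int.units_eq_one_or (Equiv.Perm.sign σ₀) with h | h <;> rw [h]
      · left; norm_num
      · right; norm_num
    · intro σ _ hσ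
      rw [if_neg]
      rintro ⟨hcc1, hcc2⟩
      apply hσ
      ext q
      by_cases hq : k < g q
      · have hmem : ((σ q : Fin (k+1)), g q) ∈ Finset.univ.image v := by
          rw [← hcc2]
          exact Finset.mem_image.mpr ⟨q, (hmemT q).mpr hq, rfl⟩
        obtain ⟨i, _, hi⟩ := Finset.mem_image.mp hmem
        have hai : a i = σ q := congrArg Prod.fst hi
        have hbi : b i = g q := congrArg Prod.snd hi
        have hchoosei : (hexi q hq).choose = i := hb (by rw [hbchoose q hq, hbi])
        simp only [hσ₀app, hf]
        simp only [dif_pos hq, hchoosei]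
        exact (congrArg Fin.val hai.symm)
      · have h1 := hcc1 q (fun h => hq ((hmemT q).mp h))
        have h2 := hc1 q (fun h => hq ((hmemT q).mp h))
        have : ((σ q : Fin (k+1)) : ℕ) = ((σ₀ q : Fin (k+1)) : ℕ) := by rw [← h1, h2]
        exact this
  · intro hJne
    rw [hstep1, hdet]
    refine Finset.sum_eq_zero fun σ _ => ?_
    rw [if_neg]
    rintro ⟨h1, h2⟩
    exact hJne (hdirA σ h1 h2)
end
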